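/- For every n ≥ 0, the number of type I sequences of length n for n+2 indeterminants equals the Catalan number C_{n+1} = binom(2n+2, n+1)/(n+2); these sequences index the vertices of the Stasheff associahedron K_{n+2}, which correspond bijectively to planar binary rooted trees with n+2 leaves. -/

import Mathlib

/-- A planar rooted tree: either a leaf, or an internal node carrying an ordered list
of subtrees.  (Well-formedness — every internal node has at least two children — is
the separate predicate `PRT.WF`.) -/
inductive PRT : Type where
  | leaf : PRT
  | node : List PRT → PRT

namespace PRT

/-- The number of leaves of a planar rooted tree. -/
def leaves : PRT → ℕ
  | .leaf => 1
  | .node ts => (ts.attach.map (fun t => leaves t.1)).sum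
decreasing_by
  have := List.sizeOf_lt_of_mem t.2
  simp only [PRT.node.sizeOf_spec]
  omega

/-- The number of internal nodes of a planar rooted tree. -/
def nodes : PRT → ℕ
  | .leaf => 0
  | .node ts => 1 + (ts.attach.map (fun t => nodes t.1)).sum
decreasing_by
  have := List.sizeOf_lt_of_mem t.2
  simp only [PRT.node.sizeOf_spec]
  omega

/-- A planar rooted tree is well formed when every internal node carries at least two
subtrees. -/
inductive WF : PRT → Prop where
  | leaf : WF .leaf
  | node (ts : List PRT) (h2 : 2 ≤ ts.length) (h : ∀ t ∈ ts, WF t) : WF (.node ts)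

/-- A planar binary rooted tree: every internal node has exactly two children. -/
inductive Binary : PRT → Prop where
  | leaf : Binary .leaf
  | node (a b : PRT) : Binary a → Binary b → Binary (.node [a, b])

end PRT

/-- `AdmissibleFrom nr s`: the sequence `s` of pairs `(i, ℓ)` is admissible when the
current number of "free" slots is `nr` (i.e. the first operator acts on `nr + 2`
indeterminants): either `i = 0` and `1 ≤ ℓ ≤ nr`, or `1 ≤ i ≤ nr` and
`1 ≤ ℓ ≤ nr + 1 - i`; afterwards `nr` drops by `ℓ`. -/
def AdmissibleFrom : ℕ → List (ℕ × ℕ) → Prop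
  | _, [] => True
  | nr, (i, l) :: rest =>
      ((i = 0 ∧ 1 ≤ l ∧ l ≤ nr) ∨ (1 ≤ i ∧ i ≤ nr ∧ 1 ≤ l ∧ l ≤ nr + 1 - i)) ∧
      AdmissibleFrom (nr - l) rest

/-- A type I sequence for `n + 2` indeterminants: an admissible sequence whose first
indices are weakly decreasing. -/
def TypeISeq (n : ℕ) (s : List (ℕ × ℕ)) : Prop :=
  AdmissibleFrom n s ∧ s.Chain' (fun a b => b.1 ≤ a.1)

/-! ### Counting framework -/

def ccount : ℕ → ℕ → ℕ
  | 0, _ => 1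
  | n+1, c => ∑ j ∈ Finset.range (min c (n+1) + 1), ccount n j

def seqs : ℕ → ℕ → Finset (List ℕ)
  | 0, _ => {[]}
  | n+1, c => (Finset.range (min c (n+1) + 1)).biUnion fun j => (seqs n j).image (j :: ·)

lemma seqs_card (n c : ℕ) : (seqs n c).card = ccount n c := by
  induction n generalizing c with
  | zero => simp [seqs, ccount]
  | succ n ih =>
    rw [seqs, ccount, Finset.card_biUnion]
    · exact Finset.sum_congr rfl fun j _ => by
        rw [Finset.card_image_of_injective _ (fun a b h => by injection h), ih]
    · intro x _ y _ hxy
      simp only [Finset.disjoint_left, Finset.mem_image]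
      rintro l ⟨a, _, rfl⟩ ⟨b, _, h⟩
      exact hxy (by injection h; omega)

lemma ccount_zero (n : ℕ) : ccount n 0 = 1 := by
  cases n with
  | zero => rfl
  | succ n => simp [ccount, ccount_zero n]

lemma ccount_min (n c : ℕ) : ccount n c = ccount n (min c n) := by
  cases n with
  | zero => rfl
  | succ n => simp [ccount]

/-- Catalan triangle identity. -/
lemma ccount_key : ∀ n k, k ≤ n + 1 →
    ccount n k + (n + k + 1).choose (n + 2) = (n + k + 1).choose k := by
  intro n
  induction n with
  | zero =>
    intro k hk
    interval_cases k
    · simp [ccount_zero]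
    · have : ccount 0 1 = 1 := rfl
      simp [this]
  | succ n ih =>
    -- first the range k ≤ n+1, by inner induction
    have main : ∀ k, k ≤ n + 1 →
        ccount (n+1) k + (n + 1 + k + 1).choose (n + 3) = (n + 1 + k + 1).choose k := by
      intro k hk
      have hmin : min k (n+1) = k := by omega
      rw [show ccount (n+1) k = ∑ j ∈ Finset.range (min k (n+1) + 1), ccount n j from rfl, hmin]
      induction k with
      | zero =>
        simp [ccount_zero, Nat.choose_eq_zero_of_lt (show n + 2 < n + 3 by omega)]
      | succ k ihk =>
        rw [Finset.sum_range_succ]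
        have h1 := ihk (by omega)
        have h2 := ih (k+1) (by omega)
        have p1 : (n + 1 + (k+1) + 1).choose (n + 3)
            = (n + k + 2).choose (n + 2) + (n + k + 2).choose (n + 3) := by
          rw [show n + 1 + (k+1) + 1 = (n + k + 2) + 1 by omega]
          rw [Nat.choose_succ_succ' (n + k + 2) (n + 2)]
        have p2 : (n + 1 + (k+1) + 1).choose (k + 1)
            = (n + k + 2).choose k + (n + k + 2).choose (k + 1) := by
          rw [show n + 1 + (k+1) + 1 = (n + k + 2) + 1 by omega]
          rw [Nat.choose_succ_succ' (n + k + 2) k]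
        have e1 : n + 1 + k + 1 = n + k + 2 := by omega
        have e2 : n + (k+1) + 1 = n + k + 2 := by omega
        rw [e1] at h1
        rw [e2] at h2
        omega
    intro k hk
    rcases Nat.lt_or_ge k (n + 2) with h | h
    · exact main k (by omega)
    · -- k = n + 2 : extension step
      have hk2 : k = n + 2 := by omega
      subst hk2
      have h := main (n+1) le_rfl
      have hm : ccount (n+1) (n+2) = ccount (n+1) (n+1) := by
        rw [ccount_min]; simp
      have p1 : (n + 1 + (n+2) + 1).choose (n + 3)
          = (2*n + 3).choose (n + 2) + (2*n + 3).choose (n + 3) := by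
        rw [show n + 1 + (n+2) + 1 = (2*n + 3) + 1 by omega]
        rw [Nat.choose_succ_succ' (2*n+3) (n+2)]
      have p2 : (n + 1 + (n+2) + 1).choose (n + 2)
          = (2*n + 3).choose (n + 1) + (2*n + 3).choose (n + 2) := by
        rw [show n + 1 + (n+2) + 1 = (2*n + 3) + 1 by omega]
        rw [Nat.choose_succ_succ' (2*n+3) (n+1)]
      have e1 : n + 1 + (n+1) + 1 = 2*n + 3 := by omega
      rw [e1] at h
      rw [show n + 1 + 2 = n + 3 by omega]
      omega

lemma ccount_catalan (n : ℕ) : (n + 2) * ccount n n = (2 * n + 2).choose (n + 1) := by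
  have h := ccount_key n n (by omega)
  rw [show n + n + 1 = 2*n + 1 by omega] at h
  set a := (2*n+1).choose n with ha
  set b := (2*n+1).choose (n+1) with hb
  set x := (2*n+1).choose (n+2) with hx
  have hba : b = a := by
    have := Nat.choose_succ_right_eq (2*n+1) n
    rw [show 2*n+1-n = n+1 by omega] at this
    exact Nat.eq_of_mul_eq_mul_right (by omega) this
  have hxb : x * (n + 2) = a * n := by
    have := Nat.choose_succ_right_eq (2*n+1) (n+1)
    rw [show 2*n+1-(n+1) = n by omega, ← hb, ← hx, hba] at this
    exact this
  have hpas : (2*n + 2).choose (n+1) = a + b := by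
    rw [show 2*n+2 = (2*n+1)+1 by omega, Nat.choose_succ_succ' (2*n+1) n]
  rw [hpas, hba]
  have hc : ccount n n = a - x := by omega
  have hxa : x ≤ a := by omega
  rw [hc]
  have key2 : (n+2) * (a - x) + (n+2) * x = (n+2) * a := by
    rw [← Nat.mul_add, Nat.sub_add_cancel hxa]
  have hx2 : (n+2) * x = x * (n+2) := Nat.mul_comm _ _
  have hC : (n+2) * a = a * n + 2 * a := by ring
  omega

/-! ### Admissible sequences of maximal length -/

lemma adm_length_le : ∀ (s : List (ℕ × ℕ)) (m : ℕ), AdmissibleFrom m s → s.length ≤ m := by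
  intro s
  induction s with
  | nil => intro m _; simp
  | cons p t ih =>
    obtain ⟨i, l⟩ := p
    intro m h
    simp only [AdmissibleFrom] at h
    obtain ⟨hc, hrest⟩ := h
    have ht := ih (m - l) hrest
    simp only [List.length_cons]
    omega

lemma adm_snd_one : ∀ (s : List (ℕ × ℕ)) (m : ℕ), AdmissibleFrom m s → s.length = m →
    ∀ p ∈ s, p.2 = 1 := by
  intro s
  induction s with
  | nil => simp
  | cons p t ih =>
    obtain ⟨i, l⟩ := p
    intro m h hlen
    simp only [AdmissibleFrom] at h
    obtain ⟨hc, hrest⟩ := h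
    have ht := adm_length_le t (m - l) hrest
    simp only [List.length_cons] at hlen
    have hl1 : l = 1 := by omega
    subst hl1
    intro q hq
    rcases List.mem_cons.mp hq with rfl | hq
    · rfl
    · exact ih (m - 1) hrest (by omega) q hq

lemma map_pair_one (s : List (ℕ × ℕ)) (h : ∀ p ∈ s, p.2 = 1) :
    (s.map Prod.fst).map (fun j => (j, 1)) = s := by
  induction s with
  | nil => rfl
  | cons p t ih =>
    simp only [List.map_cons, List.cons.injEq]
    exact ⟨by have := h p (by simp); cases p; simp_all, ih fun q hq => h q (by simp [hq])⟩

/-! ### Membership in `seqs` -/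

lemma mem_seqs : ∀ (n c : ℕ) (l : List ℕ), l ∈ seqs n c ↔
    (l.length = n ∧ AdmissibleFrom n (l.map (fun j => (j, 1))) ∧
      l.Chain' (fun a b => b ≤ a) ∧ ∀ x ∈ l.head?, x ≤ c) := by
  intro n
  induction n with
  | zero =>
    intro c l
    simp only [seqs, Finset.mem_singleton, List.length_eq_zero_iff]
    constructor
    · rintro rfl; exact ⟨rfl, trivial, List.isChain_nil, by simp⟩
    · exact fun h => h.1
  | succ n ih =>
    intro c l
    cases l with
    | nil =>
      simp [seqs]
    | cons j t =>
      simp only [seqs, Finset.mem_biUnion, Finset.mem_range, Finset.mem_image]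
      constructor
      · rintro ⟨a, ha, b, hb, heq⟩
        cases heq
        obtain ⟨hlen, hadm, hch, hhd⟩ := (ih j t).mp hb
        refine ⟨by simp [hlen], ?_, ?_, ?_⟩
        · simp only [List.map_cons, AdmissibleFrom]
          refine ⟨by omega, ?_⟩
          rw [show n + 1 - 1 = n by omega]
          exact hadm
        · exact List.isChain_cons.mpr ⟨hhd, hch⟩
        · simp only [List.head?_cons, Option.mem_some_iff]
          rintro x rfl
          omega
      · rintro ⟨hlen, hadm, hch, hhd⟩
        simp only [List.length_cons] at hlen
        simp only [List.map_cons, AdmissibleFrom] at hadm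
        obtain ⟨hc, hrest⟩ := hadm
        rw [show n + 1 - 1 = n by omega] at hrest
        have hjc : j ≤ c := hhd j (by simp)
        obtain ⟨hh, hcht⟩ := List.isChain_cons.mp hch
        exact ⟨j, by omega, t, (ih j t).mpr ⟨by omega, hrest, hcht, hh⟩, rfl⟩

lemma adm_head_le (s : List (ℕ × ℕ)) (m : ℕ) (h : AdmissibleFrom m s) :
    ∀ x ∈ (s.map Prod.fst).head?, x ≤ m := by
  cases s with
  | nil => simp
  | cons p t =>
    obtain ⟨i, l⟩ := p
    simp only [AdmissibleFrom] at h
    simp only [List.map_cons, List.head?_cons, Option.mem_some_iff]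
    rintro x rfl
    omega

/-! ### Equivalence with type I sequences -/

noncomputable def seqEquiv (n : ℕ) :
    {l : List ℕ // l ∈ seqs n n} ≃ {s : List (ℕ × ℕ) // s.length = n ∧ TypeISeq n s} where
  toFun l := ⟨l.1.map (fun j => (j, 1)), by
    obtain ⟨hlen, hadm, hch, _⟩ := (mem_seqs n n l.1).mp l.2
    refine ⟨by simp [hlen], hadm, ?_⟩
    exact (List.isChain_map (fun j => (j, 1))).mpr hch⟩
  invFun s := ⟨s.1.map Prod.fst, by
    obtain ⟨hlen, hadm, hch⟩ := s.2
    have hone := adm_snd_one s.1 n hadm hlen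
    have hmap := map_pair_one s.1 hone
    rw [mem_seqs]
    refine ⟨by simp [hlen], by rw [hmap]; exact hadm, ?_, ?_⟩
    · exact List.isChain_map_of_isChain Prod.fst (fun a b h => h) hch
    · exact adm_head_le s.1 n hadm⟩
  left_inv l := by
    apply Subtype.ext
    show (l.1.map (fun j => (j, 1))).map Prod.fst = l.1
    simp [Function.comp_def]
  right_inv s := by
    apply Subtype.ext
    obtain ⟨hlen, hadm, hch⟩ := s.2
    exact map_pair_one s.1 (adm_snd_one s.1 n hadm hlen)

/-! ### Binary PRTs vs Mathlib binary trees -/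

lemma PRT.leaves_node (ts : List PRT) : (PRT.node ts).leaves = (ts.map PRT.leaves).sum := by
  rw [PRT.leaves]
  congr 1
  simp [List.attach_map_subtype_val]

lemma PRT.leaves_leaf : PRT.leaf.leaves = 1 := by rw [PRT.leaves]

def toPRT : Tree Unit → PRT
  | .nil => .leaf
  | .node _ l r => .node [toPRT l, toPRT r]

def toTree : PRT → Tree Unit
  | .leaf => .nil
  | .node [a, b] => .node () (toTree a) (toTree b)
  | .node _ => .nil

lemma binary_toPRT (x : Tree Unit) : (toPRT x).Binary := by
  induction x with
  | nil => exact .leaf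
  | node a l r ihl ihr => exact .node _ _ ihl ihr

lemma leaves_toPRT (x : Tree Unit) : (toPRT x).leaves = x.numNodes + 1 := by
  induction x with
  | nil => simp [toPRT, PRT.leaves_leaf]
  | node a l r ihl ihr =>
    simp [toPRT, PRT.leaves_node, Tree.numNodes, ihl, ihr]
    omega

lemma toTree_toPRT (x : Tree Unit) : toTree (toPRT x) = x := by
  induction x with
  | nil => rfl
  | node a l r ihl ihr => cases a; simp [toPRT, toTree, ihl, ihr]

lemma toPRT_toTree {t : PRT} (h : t.Binary) : toPRT (toTree t) = t := by
  induction h with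
  | leaf => rfl
  | node a b ha hb iha ihb => simp [toTree, toPRT, iha, ihb]

noncomputable def prtEquiv (n : ℕ) :
    {x : Tree Unit // x ∈ Tree.treesOfNumNodesEq (n + 1)} ≃
      {t : PRT // t.Binary ∧ t.leaves = n + 2} where
  toFun x := ⟨toPRT x.1, binary_toPRT _, by
    have hx := BinaryTree.mem_treesOfNumNodesEq.mp x.2
    rw [leaves_toPRT]; unfold Tree.numNodes; omega⟩
  invFun t := ⟨toTree t.1, by
    rw [BinaryTree.mem_treesOfNumNodesEq]
    have h1 := leaves_toPRT (toTree t.1)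
    rw [toPRT_toTree t.2.1] at h1
    have := t.2.2
    unfold Tree.numNodes at h1
    omega⟩
  left_inv x := Subtype.ext (toTree_toPRT x.1)
  right_inv t := Subtype.ext (toPRT_toTree t.2.1)


/-- For every `n ≥ 0`, the number of type I sequences of length `n` for
`n + 2` indeterminants equals the Catalan number `C_{n+1} = (2n+2).choose (n+1) / (n+2)`;
these sequences index the vertices of the Stasheff associahedron `K_{n+2}`, which
correspond bijectively to planar binary rooted trees with `n + 2` leaves. -/
theorem typeISeq_card_catalan (n : ℕ) :
    Nat.card {s : List (ℕ × ℕ) // s.length = n ∧ TypeISeq n s} =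
        (2 * n + 2).choose (n + 1) / (n + 2) ∧
      Nonempty ({s : List (ℕ × ℕ) // s.length = n ∧ TypeISeq n s} ≃
        {t : PRT // t.Binary ∧ t.leaves = n + 2}) := by
  have hcard1 : Nat.card {s : List (ℕ × ℕ) // s.length = n ∧ TypeISeq n s} = ccount n n := by
    rw [← seqs_card]
    exact ((Nat.card_congr (seqEquiv n)).symm.trans (Nat.card_eq_finsetCard (seqs n n)))
  have hdvd : (n + 2) * ccount n n = (2 * n + 2).choose (n + 1) := ccount_catalan n
  constructor
  · rw [hcard1, ← hdvd, Nat.mul_div_cancel_left _ (show 0 < n + 2 by omega)]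
  · have hcat : (n + 2) * catalan (n + 1) = (2 * n + 2).choose (n + 1) := by
      have h := succ_mul_catalan_eq_centralBinom (n + 1)
      rw [Nat.centralBinom, show 2 * (n + 1) = 2 * n + 2 by omega] at h
      exact h
    have hcc : ccount n n = catalan (n + 1) :=
      Nat.eq_of_mul_eq_mul_left (show 0 < n + 2 by omega) (by rw [hdvd, hcat])
    have hcard2 : (seqs n n).card = (Tree.treesOfNumNodesEq (n + 1)).card := by
      rw [seqs_card, BinaryTree.treesOfNumNodesEq_card_eq_catalan, hcc]
    exact ⟨(seqEquiv n).symm.trans ((Finset.equivOfCardEq hcard2).trans (prtEquiv n))⟩
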